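/- For every k ≥ 1 and variables ξ₊, ξ₋, the identity (1-ξ₊ξ₋)(C_k^{3/2}(ξ₊) C_k^{3/2}(ξ₋) + C_{k-1}^{3/2}(ξ₊) C_{k-1}^{3/2}(ξ₋)) = (k+1)[(k+1)(L_{k+1}(ξ₊)L_{k+1}(ξ₋) - L_k(ξ₊)L_k(ξ₋)) + (L_k(ξ₊) - ξ₋ L_{k+1}(ξ₊)) C_k^{3/2}(ξ₋) + (L_k(ξ₋) - ξ₊ L_{k+1}(ξ₋)) C_k^{3/2}(ξ₊)] holds as polynomials in ξ₊, ξ₋. -/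

import Mathlib

/-- The Legendre polynomial `L_n`, via Bonnet's recurrence, as a function on `ℝ`. -/
noncomputable def legendreP : ℕ → ℝ → ℝ
  | 0 => fun _ => 1
  | 1 => fun x => x
  | (n+2) => fun x =>
      ((2*(n:ℝ)+3) * x * legendreP (n+1) x - ((n:ℝ)+1) * legendreP n x) / ((n:ℝ)+2)

/-- The Gegenbauer polynomial `C_n^{3/2}`, via its recurrence, as a function on `ℝ`. -/
noncomputable def gegenbauerC : ℕ → ℝ → ℝ
  | 0 => fun _ => 1
  | 1 => fun x => 3*x
  | (n+2) => fun x =>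
      ((2*(n:ℝ)+5) * x * gegenbauerC (n+1) x - ((n:ℝ)+3) * gegenbauerC n x) / ((n:ℝ)+2)

/-- The generalized Jacobi polynomial `P_τ` on `Gr(2,4)` in the variables `ξ₊, ξ₋`. -/
noncomputable def Pjac (τ₁ τ₂ : ℕ) (x y : ℝ) : ℝ :=
  (legendreP (τ₁+τ₂) x * legendreP (τ₁-τ₂) y
    + legendreP (τ₁+τ₂) y * legendreP (τ₁-τ₂) x) / 2

lemma geg_leg (n : ℕ) (x : ℝ) :
    gegenbauerC (n+1) x - x * gegenbauerC n x = ((n:ℝ)+2) * legendreP (n+1) x ∧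
    x * gegenbauerC (n+1) x - gegenbauerC n x = ((n:ℝ)+2) * legendreP (n+2) x := by
  induction n with
  | zero =>
    simp only [gegenbauerC, legendreP]
    norm_num
    constructor <;> ring
  | succ m ih =>
    obtain ⟨h1, h2⟩ := ih
    have hg : gegenbauerC (m+2) x
        = ((2*(m:ℝ)+5) * x * gegenbauerC (m+1) x - ((m:ℝ)+3) * gegenbauerC m x) / ((m:ℝ)+2) := rfl
    have hl3 : legendreP (m+3) x
        = ((2*(m+1:ℝ)+3) * x * legendreP (m+2) x - ((m+1:ℝ)+1) * legendreP (m+1) x) / ((m+1:ℝ)+2) := by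
      have : legendreP (m+1+2) x
        = ((2*((m+1:ℕ):ℝ)+3) * x * legendreP (m+1+1) x - (((m+1:ℕ):ℝ)+1) * legendreP (m+1) x) / (((m+1:ℕ):ℝ)+2) := rfl
      simpa [show m+1+2 = m+3 from rfl] using this
    have hm2 : ((m:ℝ)+2) ≠ 0 := by positivity
    have hL2 : legendreP (m+2) x = (x * gegenbauerC (m+1) x - gegenbauerC m x)/((m:ℝ)+2) := by
      rw [eq_div_iff hm2]; linarith [h2]
    have hL1 : legendreP (m+1) x = (gegenbauerC (m+1) x - x * gegenbauerC m x)/((m:ℝ)+2) := by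
      rw [eq_div_iff hm2]; linarith [h1]
    constructor
    · rw [hg, hL2]
      field_simp
      push_cast
      ring
    · rw [hg, hl3, hL2, hL1]
      push_cast
      field_simp
      ring

theorem christoffel_darboux_identity (k : ℕ) (hk : 1 ≤ k) (ξp ξm : ℝ) :
    (1 - ξp*ξm) * (gegenbauerC k ξp * gegenbauerC k ξm
        + gegenbauerC (k-1) ξp * gegenbauerC (k-1) ξm)
      = ((k:ℝ)+1) * (((k:ℝ)+1) * (legendreP (k+1) ξp * legendreP (k+1) ξm
            - legendreP k ξp * legendreP k ξm)
          + (legendreP k ξp - ξm * legendreP (k+1) ξp) * gegenbauerC k ξm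
          + (legendreP k ξm - ξp * legendreP (k+1) ξm) * gegenbauerC k ξp) := by
  obtain ⟨m, rfl⟩ : ∃ m, k = m + 1 := ⟨k - 1, (Nat.succ_pred_eq_of_pos hk).symm⟩
  have hm2 : ((m:ℝ)+2) ≠ 0 := by positivity
  obtain ⟨h1p, h2p⟩ := geg_leg m ξp
  obtain ⟨h1m, h2m⟩ := geg_leg m ξm
  have e1p : legendreP (m+1) ξp = (gegenbauerC (m+1) ξp - ξp * gegenbauerC m ξp)/((m:ℝ)+2) := by
    rw [eq_div_iff hm2]; linarith
  have e2p : legendreP (m+2) ξp = (ξp * gegenbauerC (m+1) ξp - gegenbauerC m ξp)/((m:ℝ)+2) := by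
    rw [eq_div_iff hm2]; linarith
  have e1m : legendreP (m+1) ξm = (gegenbauerC (m+1) ξm - ξm * gegenbauerC m ξm)/((m:ℝ)+2) := by
    rw [eq_div_iff hm2]; linarith
  have e2m : legendreP (m+2) ξm = (ξm * gegenbauerC (m+1) ξm - gegenbauerC m ξm)/((m:ℝ)+2) := by
    rw [eq_div_iff hm2]; linarith
  simp only [show m+1+1 = m+2 from rfl, show m+1-1 = m from rfl, e1p, e2p, e1m, e2m]
  push_cast
  field_simp
  ring
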